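/- Let R be a commutative ring and Σ = {σ₁, …, σₙ} a family of ring automorphisms of R. Then R is Σ-prime if and only if the total ring of fractions Q(R) is Σ̃-prime, where Σ̃ = {σ̃₁, …, σ̃ₙ} are the induced automorphisms on Q(R). -/

import Mathlib

/-- A commutative ring `R` is `Σ`-prime (w.r.t. a family `σ` of ring endomorphisms) if
whenever `J, K` are `Σ`-invariant ideals with `J·K = 0`, then `J = 0` or `K = 0`. -/
def IsSigmaPrimeRing {R : Type*} [CommRing R] {n : ℕ} (σ : Fin n → R →+* R) : Prop :=
  ∀ J K : Ideal R,
    (∀ i, ∀ r ∈ J, σ i r ∈ J) → (∀ i, ∀ r ∈ K, σ i r ∈ K) →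
    J * K = ⊥ → J = ⊥ ∨ K = ⊥

/-- Let `R` be a commutative ring and `Σ = {σ 1, …, σ n}` a family of ring
automorphisms of `R`. Then `R` is `Σ`-prime if and only if the total ring of fractions
`Q(R) = Localization (nonZeroDivisors R)` is `Σ̃`-prime, where `Σ̃ = τ` is the induced
family of automorphisms of `Q(R)` (determined by `τ i ∘ algebraMap = algebraMap ∘ σ i`). -/
theorem sigmaPrime_iff_totalRingOfFractions_sigmaPrime
    {R : Type*} [CommRing R] {n : ℕ}
    (σ : Fin n → R ≃+* R)
    (τ : Fin n → Localization (nonZeroDivisors R) ≃+* Localization (nonZeroDivisors R))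
    (hcomp : ∀ i, ∀ r : R,
      τ i (algebraMap R (Localization (nonZeroDivisors R)) r) =
        algebraMap R (Localization (nonZeroDivisors R)) (σ i r)) :
    IsSigmaPrimeRing (fun i => (σ i : R →+* R)) ↔
      IsSigmaPrimeRing (fun i =>
        (τ i : Localization (nonZeroDivisors R) →+* Localization (nonZeroDivisors R))) := by
  set Q := Localization (nonZeroDivisors R)
  set f : R →+* Q := algebraMap R Q with hf
  have hinj : Function.Injective f := IsFractionRing.injective R Q
  have hker : RingHom.ker f = ⊥ := (RingHom.injective_iff_ker_eq_bot f).mp hinj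
  constructor
  · intro hR J K hJ hK hJK
    -- contract to R
    set J' := J.comap f with hJ'
    set K' := K.comap f with hK'
    have hJ'inv : ∀ i, ∀ r ∈ J', (σ i : R →+* R) r ∈ J' := by
      intro i r hr
      simp only [hJ', Ideal.mem_comap] at hr ⊢
      rw [show f ((σ i : R →+* R) r) = τ i (f r) from (hcomp i r).symm]
      exact hJ i _ hr
    have hK'inv : ∀ i, ∀ r ∈ K', (σ i : R →+* R) r ∈ K' := by
      intro i r hr
      simp only [hK', Ideal.mem_comap] at hr ⊢
      rw [show f ((σ i : R →+* R) r) = τ i (f r) from (hcomp i r).symm]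
      exact hK i _ hr
    have hmul : J' * K' = ⊥ := by
      rw [eq_bot_iff]
      have : J' * K' ≤ (J * K).comap f := by
        calc J' * K' ≤ Ideal.comap f (Ideal.map f J' * Ideal.map f K') := by
              rw [← Ideal.map_mul]
              exact Ideal.le_comap_map
          _ ≤ (J * K).comap f := by
              apply Ideal.comap_mono
              exact Ideal.mul_mono (Ideal.map_comap_le) (Ideal.map_comap_le)
      rw [hJK] at this
      intro x hx
      have := this hx
      simp only [Ideal.mem_comap, Ideal.mem_bot] at this
      exact Ideal.mem_bot.mpr (hinj (by simpa using this))
    rcases hR J' K' hJ'inv hK'inv hmul with h | h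
    · left
      have := IsLocalization.map_comap (nonZeroDivisors R) Q J
      rw [← this, show Ideal.under R J = J' from rfl, h, Ideal.map_bot]
    · right
      have := IsLocalization.map_comap (nonZeroDivisors R) Q K
      rw [← this, show Ideal.under R K = K' from rfl, h, Ideal.map_bot]
  · intro hQ J K hJ hK hJK
    set J' := J.map f with hJ'
    set K' := K.map f with hK'
    have hinv : ∀ (I : Ideal R), (∀ i, ∀ r ∈ I, (σ i : R →+* R) r ∈ I) →
        ∀ i, ∀ x ∈ I.map f, (τ i : Q →+* Q) x ∈ I.map f := by
      intro I hI i x hx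
      have h1 : (I.map f).map (τ i : Q →+* Q) ≤ I.map f := by
        rw [Ideal.map_map]
        have heq : (τ i : Q →+* Q).comp f = f.comp (σ i : R →+* R) := by
          ext r; exact hcomp i r
        rw [heq, ← Ideal.map_map]
        apply Ideal.map_mono
        rw [Ideal.map_le_iff_le_comap]
        intro r hr
        exact Ideal.mem_comap.mpr (hI i r hr)
      exact h1 (Ideal.mem_map_of_mem _ hx)
    have hmul : J' * K' = ⊥ := by
      rw [hJ', hK', ← Ideal.map_mul, hJK, Ideal.map_bot]
    rcases hQ J' K' (hinv J hJ) (hinv K hK) hmul with h | h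
    · left
      rw [eq_bot_iff]
      intro r hr
      have : f r ∈ J' := Ideal.mem_map_of_mem f hr
      rw [h, Ideal.mem_bot] at this
      exact Ideal.mem_bot.mpr (hinj (by simpa using this))
    · right
      rw [eq_bot_iff]
      intro r hr
      have : f r ∈ K' := Ideal.mem_map_of_mem f hr
      rw [h, Ideal.mem_bot] at this
      exact Ideal.mem_bot.mpr (hinj (by simpa using this))
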